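/- arXiv:1108.2223 — 2 statements merged into one kernel-verified Lean document; each statement's English description precedes it below -/
import Mathlib

section
/- Let α, β ∈ ℂ be nonzero, Δ(ξ) = αξ² + αβξ + β, x(ξ) = (αξ² + α(β−1)ξ)/Δ(ξ) and y(ξ) = (β(α−1)ξ + β)/Δ(ξ). Then for every ξ with Δ(ξ) ≠ 0 and x(ξ)·y(ξ) ≠ 0, one has ((x(ξ)−1)(x(ξ)−α)(y(ξ)−1)(y(ξ)−β))/(x(ξ)·y(ξ)) = ((αξ+β)²(ξ+β)(1+αξ))/Δ(ξ)². Equivalently, as a polynomial identity after clearing denominators: (x(ξ)−1)(x(ξ)−α)(y(ξ)−1)(y(ξ)−β)·Δ(ξ)² = x(ξ)·y(ξ)·(αξ+β)²(ξ+β)(1+αξ). -/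
/-- Pullback of the Kummer surface equation along the parametrization of `C₁`:
the equation of the `I₁` fiber in the coordinate `ξ`. -/
theorem I1_fiber_equation (α β ξ : ℂ) (hα : α ≠ 0) (hβ : β ≠ 0)
    (hΔ : α * ξ ^ 2 + α * β * ξ + β ≠ 0) :
    let Δ := α * ξ ^ 2 + α * β * ξ + β
    let x := (α * ξ ^ 2 + α * (β - 1) * ξ) / Δ
    let y := (β * (α - 1) * ξ + β) / Δ
    (x - 1) * (x - α) * (y - 1) * (y - β) * Δ ^ 2
        = x * y * ((α * ξ + β) ^ 2 * (ξ + β) * (1 + α * ξ)) ∧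
    (x * y ≠ 0 →
      (x - 1) * (x - α) * (y - 1) * (y - β) / (x * y)
        = (α * ξ + β) ^ 2 * (ξ + β) * (1 + α * ξ) / Δ ^ 2) := by
  intro Δ x y
  have hΔ' : Δ ≠ 0 := hΔ
  have hmain : (x - 1) * (x - α) * (y - 1) * (y - β) * Δ ^ 2
      = x * y * ((α * ξ + β) ^ 2 * (ξ + β) * (1 + α * ξ)) := by
    show ((α * ξ ^ 2 + α * (β - 1) * ξ) / Δ - 1) * ((α * ξ ^ 2 + α * (β - 1) * ξ) / Δ - α) *
        ((β * (α - 1) * ξ + β) / Δ - 1) * ((β * (α - 1) * ξ + β) / Δ - β) * Δ ^ 2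
      = (α * ξ ^ 2 + α * (β - 1) * ξ) / Δ * ((β * (α - 1) * ξ + β) / Δ) *
        ((α * ξ + β) ^ 2 * (ξ + β) * (1 + α * ξ))
    field_simp
    ring
  refine ⟨hmain, fun hxy => ?_⟩
  have h2 : (Δ:ℂ) ^ 2 ≠ 0 := pow_ne_zero _ hΔ'
  field_simp
  rw [div_eq_iff hxy]
  linear_combination hmain
end

section
/- Let χ be a real number with 0 < χ ≤ 1/10 and let λ ∈ ℂ with |λ| ≥ χ/2. Then |λ + 2χ|·|λ| ≤ 6·|λ + χ²|·|λ − χ²|. -/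
open Complex

/-- Key pointwise estimate from the appendix to §6:
for `0 < χ ≤ 1/10` and `|λ| ≥ χ/2`, `|λ+2χ||λ| ≤ 6|λ+χ²||λ−χ²|`. -/
theorem appendix_pointwise_estimate (χ : ℝ) (hχ0 : 0 < χ) (hχ1 : χ ≤ 1 / 10)
    (l : ℂ) (hl : χ / 2 ≤ ‖l‖) :
    ‖l + 2 * χ‖ * ‖l‖
      ≤ 6 * ‖l + (χ : ℂ) ^ 2‖ * ‖l - (χ : ℂ) ^ 2‖ := by
  set t := ‖l‖ with ht
  have h1 : ‖l + 2 * χ‖ ≤ t + 2 * χ := by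
    calc ‖l + 2 * χ‖ ≤ t + ‖(2 : ℂ) * χ‖ := norm_add_le _ _
    _ = t + 2 * χ := by
        congr 1
        rw [show ((2 : ℂ) * χ) = ((2 * χ : ℝ) : ℂ) by push_cast; ring,
          Complex.norm_real, Real.norm_eq_abs, abs_of_pos (by linarith)]
  have hprod : ‖l + (χ : ℂ) ^ 2‖ * ‖l - (χ : ℂ) ^ 2‖
      = ‖l ^ 2 - ((χ ^ 4 : ℝ) : ℂ)‖ := by
    rw [← norm_mul]
    congr 1
    push_cast
    ring
  have h2 : t ^ 2 ≤ ‖l + (χ : ℂ) ^ 2‖ * ‖l - (χ : ℂ) ^ 2‖ + χ ^ 4 := by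
    rw [hprod]
    have : ‖l ^ 2‖ ≤ ‖l ^ 2 - ((χ ^ 4 : ℝ) : ℂ)‖
        + ‖((χ ^ 4 : ℝ) : ℂ)‖ := by
      calc ‖l ^ 2‖ = ‖(l ^ 2 - ((χ ^ 4 : ℝ) : ℂ)) + ((χ ^ 4 : ℝ) : ℂ)‖ := by
            ring_nf
      _ ≤ _ := norm_add_le _ _
    rw [Complex.norm_real, Real.norm_eq_abs, abs_of_pos (by positivity), norm_pow] at this
    linarith
  have hL : ‖l + 2 * χ‖ * t ≤ (t + 2 * χ) * t :=
    mul_le_mul_of_nonneg_right h1 (norm_nonneg l)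
  have ht0 : 0 ≤ t := norm_nonneg l
  have hA : 0 ≤ t - χ / 2 := by linarith
  have hB : 0 ≤ 5 * t - 2 * χ := by linarith
  nlinarith [mul_nonneg hA hB, mul_nonneg hA hχ0.le, sq_nonneg χ,
    mul_nonneg (mul_nonneg hχ0.le hχ0.le) (mul_nonneg hχ0.le hχ0.le),
    mul_nonneg (sq_nonneg χ) (sub_nonneg.mpr (by nlinarith : χ ^ 2 ≤ 1 / 100))]
end
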